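/- Let C ⊆ ℝⁿ be a nonempty closed convex set and f : ℝⁿ → ℝ be continuously differentiable satisfying condition (B) on C. If D ⊆ C is a bounded set, then the set ⋃_{x∈D} {q ∈ C : ⟨∇f(x), q − x⟩ ≤ ⟨∇f(x), p − x⟩ for all p ∈ C} (the union over x ∈ D of all minimizers of p ↦ ⟨∇f(x), p − x⟩ over C) is bounded. -/

import Mathlib

open scoped RealInnerProductSpace
open Filter Topology Bornology

/-- If `C ⊆ ℝⁿ` is nonempty, closed and convex, `f` is continuously differentiable and
satisfies condition (B) on `C`, and `D ⊆ C` is bounded, then the union over `x ∈ D` of the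
sets of minimizers of `p ↦ ⟪∇f x, p - x⟫` over `C` is bounded. -/
theorem minimizers_bounded (n : ℕ) (C : Set (EuclideanSpace ℝ (Fin n)))
    (hCne : C.Nonempty) (hCcl : IsClosed C) (hCconv : Convex ℝ C)
    (f : EuclideanSpace ℝ (Fin n) → ℝ) (hf : ContDiff ℝ 1 f)
    (hB : ∀ x ∈ C, ∀ d : EuclideanSpace ℝ (Fin n),
      (∀ y ∈ C, ∀ t : ℝ, 0 ≤ t → y + t • d ∈ C) → d ≠ 0 → 0 < ⟪gradient f x, d⟫)
    (D : Set (EuclideanSpace ℝ (Fin n))) (hDC : D ⊆ C) (hD : Bornology.IsBounded D) :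
    Bornology.IsBounded
      {q | ∃ x ∈ D, q ∈ C ∧ ∀ p ∈ C, ⟪gradient f x, q - x⟫ ≤ ⟪gradient f x, p - x⟫} := by
  by_contra hub
  rw [isBounded_iff_forall_norm_le] at hub
  push_neg at hub
  have hpick : ∀ k : ℕ, ∃ q, (∃ x ∈ D, q ∈ C ∧ ∀ p ∈ C,
      ⟪gradient f x, q - x⟫ ≤ ⟪gradient f x, p - x⟫) ∧ (k : ℝ) < ‖q‖ := by
    intro k
    obtain ⟨q, hq, hn⟩ := hub k
    exact ⟨q, hq, hn⟩
  choose q hqmem hqnorm using hpick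
  choose x hxD hqC hmin using hqmem
  have hK : IsCompact (closure D) := hD.isCompact_closure
  obtain ⟨x₀, hx₀, φ, hφ, hxlim⟩ := hK.tendsto_subseq (fun k => subset_closure (hxD k))
  have hx₀C : x₀ ∈ C := by
    have := closure_mono hDC hx₀
    rwa [hCcl.closure_eq] at this
  have hqpos : ∀ k : ℕ, (0:ℝ) < ‖q k‖ := fun k =>
    lt_of_le_of_lt (Nat.cast_nonneg k) (hqnorm k)
  set u : ℕ → EuclideanSpace ℝ (Fin n) := fun k => ‖q (φ k)‖⁻¹ • q (φ k) with hu
  have husph : ∀ k, u k ∈ Metric.sphere (0 : EuclideanSpace ℝ (Fin n)) 1 := by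
    intro k
    simp only [mem_sphere_zero_iff_norm, hu, norm_smul, norm_inv, norm_norm]
    exact inv_mul_cancel₀ (hqpos (φ k)).ne'
  obtain ⟨d, hd, ψ, hψ, hdlim⟩ :=
    (isCompact_sphere (0 : EuclideanSpace ℝ (Fin n)) 1).tendsto_subseq husph
  set σ : ℕ → ℕ := fun k => φ (ψ k) with hσ
  have hσmono : StrictMono σ := hφ.comp hψ
  have hnormtop : Tendsto (fun k => ‖q (σ k)‖) atTop atTop := by
    refine tendsto_atTop_mono (fun k => ?_) tendsto_natCast_atTop_atTop
    exact le_trans (Nat.cast_le.mpr (hσmono.le_apply)) (hqnorm (σ k)).le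
  have hinv : Tendsto (fun k => ‖q (σ k)‖⁻¹) atTop (𝓝 0) :=
    tendsto_inv_atTop_zero.comp hnormtop
  have hxlimσ : Tendsto (fun k => x (σ k)) atTop (𝓝 x₀) := hxlim.comp hψ.tendsto_atTop
  have hdlim' : Tendsto (fun k => u (ψ k)) atTop (𝓝 d) := hdlim
  have hrec : ∀ y ∈ C, ∀ t : ℝ, 0 ≤ t → y + t • d ∈ C := by
    intro y hy t ht
    have hv : Tendsto (fun k => y + t • u (ψ k) - (t * ‖q (σ k)‖⁻¹) • y) atTop
        (𝓝 (y + t • d)) := by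
      have h1 : Tendsto (fun k => t • u (ψ k)) atTop (𝓝 (t • d)) := hdlim'.const_smul t
      have h2 : Tendsto (fun k => (t * ‖q (σ k)‖⁻¹) • y) atTop (𝓝 ((t * 0) • y)) :=
        (tendsto_const_nhds.mul hinv).smul_const y
      have := (h1.const_add y).sub h2
      simpa using this
    refine hCcl.mem_of_tendsto hv ?_
    filter_upwards [hnormtop.eventually_ge_atTop t] with k hk
    have hqp := hqpos (σ k)
    have hs0 : 0 ≤ t * ‖q (σ k)‖⁻¹ := by positivity
    have hs1 : t * ‖q (σ k)‖⁻¹ ≤ 1 := by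
      rw [← div_eq_mul_inv]
      exact (div_le_one hqp).mpr hk
    have hmem := hCconv hy (hqC (σ k)) (a := 1 - t * ‖q (σ k)‖⁻¹)
      (b := t * ‖q (σ k)‖⁻¹) (by linarith) hs0 (by ring)
    have heq : y + t • u (ψ k) - (t * ‖q (σ k)‖⁻¹) • y
        = (1 - t * ‖q (σ k)‖⁻¹) • y + (t * ‖q (σ k)‖⁻¹) • q (σ k) := by
      simp only [hu, smul_smul]
      module
    rw [heq]
    exact hmem
  have hd1 : d ≠ 0 := by
    have h1 : ‖d‖ = 1 := mem_sphere_zero_iff_norm.mp hd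
    intro h
    simp [h] at h1
  have hgc : Continuous fun z => gradient f z := by
    have hfd : Continuous fun z => fderiv ℝ f z := hf.continuous_fderiv one_ne_zero
    exact (InnerProductSpace.toDual ℝ
      (EuclideanSpace ℝ (Fin n))).symm.continuous.comp hfd
  have hglim : Tendsto (fun k => gradient f (x (σ k))) atTop (𝓝 (gradient f x₀)) :=
    (hgc.tendsto x₀).comp hxlimσ
  have hinner : Tendsto (fun k => ⟪gradient f (x (σ k)), u (ψ k)⟫) atTop
      (𝓝 ⟪gradient f x₀, d⟫) := hglim.inner hdlim'
  obtain ⟨p₀, hp₀⟩ := hCne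
  have hle : ∀ k, ⟪gradient f (x (σ k)), u (ψ k)⟫
      ≤ ‖q (σ k)‖⁻¹ * ⟪gradient f (x (σ k)), p₀⟫ := by
    intro k
    have h := hmin (σ k) p₀ hp₀
    rw [inner_sub_right, inner_sub_right] at h
    have hq : ⟪gradient f (x (σ k)), q (σ k)⟫ ≤ ⟪gradient f (x (σ k)), p₀⟫ := by linarith
    have heq : ⟪gradient f (x (σ k)), u (ψ k)⟫
        = ‖q (σ k)‖⁻¹ * ⟪gradient f (x (σ k)), q (σ k)⟫ := by
      simp [hu, inner_smul_right]
      rfl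
    rw [heq]
    exact mul_le_mul_of_nonneg_left hq (inv_nonneg.mpr (norm_nonneg _))
  have hrhs : Tendsto (fun k => ‖q (σ k)‖⁻¹ * ⟪gradient f (x (σ k)), p₀⟫) atTop
      (𝓝 (0 * ⟪gradient f x₀, p₀⟫)) := hinv.mul (hglim.inner tendsto_const_nhds)
  have hle0 : ⟪gradient f x₀, d⟫ ≤ 0 := by
    have := le_of_tendsto_of_tendsto' hinner (by simpa using hrhs) hle
    simpa using this
  exact absurd (hB x₀ hx₀C d hrec hd1) (not_lt.mpr hle0)
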